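/- Every nilpotent group is acyclically closed. -/

import Mathlib

open Monoid

/-- The homomorphism `G ∗ F_m → H₁(F_m)` : kill `G`, project the free group
`F_m` onto its abelianization `ℤ^m` (written multiplicatively). -/
noncomputable def acyclicTest (G : Type*) [Group G] (m : ℕ) :
    (Monoid.Coprod G (FreeGroup (Fin m))) →* Multiplicative (Fin m →₀ ℤ) :=
  Monoid.Coprod.lift 1
    (FreeGroup.lift fun j => Multiplicative.ofAdd (Finsupp.single j (1 : ℤ)))

/-- A word `w ∈ G ∗ F_m` is acyclic if it dies in `H₁(F_m)`. -/
def IsAcyclicWord {G : Type*} [Group G] {m : ℕ}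
    (w : Monoid.Coprod G (FreeGroup (Fin m))) : Prop :=
  acyclicTest G m w = 1

/-- Substituting the values `g : Fin m → G` for the variables in a word of `G ∗ F_m`. -/
noncomputable def substWord {G : Type*} [Group G] {m : ℕ} (g : Fin m → G) :
    (Monoid.Coprod G (FreeGroup (Fin m))) →* G :=
  Monoid.Coprod.lift (MonoidHom.id G) (FreeGroup.lift g)

/-- A group `G` is *acyclically closed* (AC) if every acyclic system of equations
`x_i = w_i(x_1, …, x_m)` over `G` has a unique solution in `G`. -/
def IsAcyclicallyClosed (G : Type*) [Group G] : Prop :=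
  ∀ (m : ℕ) (w : Fin m → Monoid.Coprod G (FreeGroup (Fin m))),
    (∀ i, IsAcyclicWord (w i)) →
    ∃! g : Fin m → G, ∀ i, substWord g (w i) = g i

section Aux

variable {G : Type*} [Group G] {m : ℕ}

instance centerCommGroupAux : CommGroup (Subgroup.center G) :=
  { (inferInstance : Group (Subgroup.center G)) with
    mul_comm := fun a b => Subtype.ext (Subgroup.mem_center_iff.mp a.2 b).symm }

/-- The "exponent collector": sends a multiplicative finsupp to a product of central
elements raised to the corresponding powers. -/
noncomputable def centProd (z : Fin m → Subgroup.center G) :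
    Multiplicative (Fin m →₀ ℤ) →* Subgroup.center G where
  toFun f := ∏ j : Fin m, z j ^ (Multiplicative.toAdd f) j
  map_one' := by simp
  map_mul' f f' := by
    have h : ∀ j ∈ Finset.univ, z j ^ (Multiplicative.toAdd (f * f')) j
        = z j ^ (Multiplicative.toAdd f) j * z j ^ (Multiplicative.toAdd f') j := by
      intro j _
      rw [← zpow_add]
      rfl
    show (∏ j : Fin m, z j ^ (Multiplicative.toAdd (f * f')) j)
        = (∏ j : Fin m, z j ^ (Multiplicative.toAdd f) j)
          * ∏ j : Fin m, z j ^ (Multiplicative.toAdd f') j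
    rw [Finset.prod_congr rfl h, Finset.prod_mul_distrib]

/-- Substituting `g·z` with `z` central, as a hom equal to `substWord g` times
the exponent collector. -/
lemma substWord_mul_central (g : Fin m → G) (z : Fin m → Subgroup.center G) :
    substWord (fun j => g j * z j)
      = { toFun := fun u => substWord g u * (centProd z (acyclicTest G m u) : G),
          map_one' := by simp,
          map_mul' := by
            intro a b
            simp only [map_mul]
            have hc : ((centProd z (acyclicTest G m a)) : G) ∈ Subgroup.center G :=
              (centProd z (acyclicTest G m a)).2
            rw [Subgroup.coe_mul, ← mul_assoc, ← mul_assoc,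
              mul_assoc (substWord g a), Subgroup.mem_center_iff.mp hc (substWord g b),
              ← mul_assoc] } := by
  apply Monoid.Coprod.hom_ext
  · ext a
    simp [substWord, acyclicTest]
  · apply FreeGroup.ext_hom
    intro j
    show substWord (fun j => g j * z j) (Coprod.inr (FreeGroup.of j))
        = substWord g (Coprod.inr (FreeGroup.of j))
          * (centProd z (acyclicTest G m (Coprod.inr (FreeGroup.of j))) : G)
    simp only [substWord, acyclicTest, Coprod.lift_apply_inr, FreeGroup.lift_apply_of, centProd]
    congr 1
    simp only [MonoidHom.coe_mk, OneHom.coe_mk, toAdd_ofAdd]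
    rw [show (∏ k : Fin m, z k ^ (Finsupp.single j (1:ℤ)) k) = z j by
      rw [Finset.prod_eq_single j]
      · simp
      · intro k _ hk; rw [Finsupp.single_apply, if_neg (Ne.symm hk)]; simp
      · simp]

lemma substWord_mul_central_apply (g : Fin m → G) (z : Fin m → Subgroup.center G)
    {w : Monoid.Coprod G (FreeGroup (Fin m))} (hw : IsAcyclicWord w) :
    substWord (fun j => g j * z j) w = substWord g w := by
  rw [substWord_mul_central g z]
  have h1 : acyclicTest G m w = 1 := hw
  show substWord g w * (centProd z (acyclicTest G m w) : G) = substWord g w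
  rw [h1, map_one]
  simp

end Aux

section Quot

variable {G : Type*} [Group G] {m : ℕ}

local notation "π" => QuotientGroup.mk' (Subgroup.center G)

lemma acyclicTest_map (u : Monoid.Coprod G (FreeGroup (Fin m))) :
    acyclicTest (G ⧸ Subgroup.center G) m (Coprod.map π (MonoidHom.id _) u)
      = acyclicTest G m u := by
  have : (acyclicTest (G ⧸ Subgroup.center G) m).comp (Coprod.map π (MonoidHom.id _))
      = acyclicTest G m := by
    apply Monoid.Coprod.hom_ext
    · ext a
      simp [acyclicTest]
    · rfl
  exact DFunLike.congr_fun this u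

lemma substWord_map (g : Fin m → G) (u : Monoid.Coprod G (FreeGroup (Fin m))) :
    π (substWord g u)
      = substWord (fun j => π (g j)) (Coprod.map π (MonoidHom.id _) u) := by
  have : (QuotientGroup.mk' (Subgroup.center G)).comp (substWord g)
      = (substWord (fun j => π (g j))).comp (Coprod.map π (MonoidHom.id _)) := by
    apply Monoid.Coprod.hom_ext
    · ext a
      simp [substWord]
    · apply FreeGroup.ext_hom
      intro j
      show π (substWord g (Coprod.inr (FreeGroup.of j)))
          = substWord (fun j => π (g j)) (Coprod.map π (MonoidHom.id _) (Coprod.inr (FreeGroup.of j)))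
      simp [substWord, Coprod.map_apply_inr]
  exact DFunLike.congr_fun this u

end Quot

/-- Every nilpotent group is acyclically closed. -/
theorem isAcyclicallyClosed_of_nilpotent (G : Type*) [Group G] [Group.IsNilpotent G] :
    IsAcyclicallyClosed G := by
  refine nilpotent_center_quotient_ind
    (P := fun G _ _ => IsAcyclicallyClosed G) G ?_ ?_
  · intro G _ _ m w _
    exact ⟨fun _ => 1, fun i => Subsingleton.elim _ _,
      fun y _ => funext fun i => Subsingleton.elim _ _⟩
  · intro G _ _ ih m w hw
    set Z := Subgroup.center G
    let π := QuotientGroup.mk' Z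
    set w' : Fin m → Monoid.Coprod (G ⧸ Z) (FreeGroup (Fin m)) :=
      fun i => Coprod.map π (MonoidHom.id _) (w i) with hw'def
    have hw' : ∀ i, IsAcyclicWord (w' i) := by
      intro i
      show acyclicTest _ m (w' i) = 1
      rw [hw'def]
      rw [acyclicTest_map]
      exact hw i
    obtain ⟨gb, hgb, hgbu⟩ := ih m w' hw'
    set g₀ : Fin m → G := fun j => Quotient.out (gb j) with hg₀
    have hπg₀ : ∀ j, π (g₀ j) = gb j := fun j => Quotient.out_eq (gb j)
    -- two solutions mapping to the same thing downstairs are equal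
    have key : ∀ g₁ g₂ : Fin m → G, (∀ i, substWord g₁ (w i) = g₁ i) →
        (∀ j, π (g₁ j) = π (g₂ j)) → (∀ i, substWord g₂ (w i) = g₂ i) → g₁ = g₂ := by
      intro g₁ g₂ h₁ hpi h₂
      have hzc : ∀ j, (g₁ j)⁻¹ * g₂ j ∈ Z := by
        intro j
        have : π ((g₁ j)⁻¹ * g₂ j) = 1 := by
          rw [map_mul, map_inv, hpi j, inv_mul_cancel]
        rwa [← QuotientGroup.ker_mk' Z, MonoidHom.mem_ker]
      set z : Fin m → Z := fun j => ⟨(g₁ j)⁻¹ * g₂ j, hzc j⟩ with hz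
      have hg₂ : g₂ = fun j => g₁ j * (z j : G) := by
        funext j
        simp [hz]
      funext i
      have := substWord_mul_central_apply g₁ z (hw i)
      rw [← h₁ i, ← h₂ i, hg₂, this]
    -- existence
    have hsol : ∀ i, π (substWord g₀ (w i)) = π (g₀ i) := by
      intro i
      rw [substWord_map, hπg₀ i]
      have : (fun j => π (g₀ j)) = gb := funext hπg₀
      rw [this]
      exact hgb i
    have hzc : ∀ i, (g₀ i)⁻¹ * substWord g₀ (w i) ∈ Z := by
      intro i
      have : π ((g₀ i)⁻¹ * substWord g₀ (w i)) = 1 := by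
        rw [map_mul, map_inv, hsol i, inv_mul_cancel]
      rwa [← QuotientGroup.ker_mk' Z, MonoidHom.mem_ker]
    set z : Fin m → Z := fun i => ⟨(g₀ i)⁻¹ * substWord g₀ (w i), hzc i⟩ with hz
    set g : Fin m → G := fun i => g₀ i * (z i : G) with hg
    have hgsol : ∀ i, substWord g (w i) = g i := by
      intro i
      rw [hg]
      rw [substWord_mul_central_apply g₀ z (hw i)]
      show substWord g₀ (w i) = g₀ i * ((g₀ i)⁻¹ * substWord g₀ (w i))
      rw [mul_inv_cancel_left]
    refine ⟨g, hgsol, fun y hy => ?_⟩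
    -- uniqueness
    have hproj : ∀ (g' : Fin m → G), (∀ i, substWord g' (w i) = g' i) →
        (fun j => π (g' j)) = gb := by
      intro g' hg'
      apply hgbu
      intro i
      rw [hw'def]
      rw [← substWord_map]
      rw [hg' i]
    have h1 := hproj y hy
    have h2 := hproj g hgsol
    exact key y g hy (fun j => by rw [congrFun h1 j, congrFun h2 j]) hgsol
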